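/- Every 2-neighborly centrally symmetric polytope is an antipodal polytope: for every two vertices v and w of a centrally symmetric d-polytope P in which every pair of non-antipodal vertices spans an edge, there exist two distinct parallel supporting hyperplanes of P, one containing v and the other containing w. -/
import Mathlib

lemma seg_aux {M : Type*} [AddCommGroup M] [Module ℝ M] {v w : M} {s s' t t' : ℝ}
    (hs : 0 ≤ s) (hs' : 0 ≤ s') (hs1 : s + s' = 1)
    (ht : 0 ≤ t) (ht' : 0 ≤ t') (ht1 : t + t' = 1)
    (hw : s • v + s' • (-w) = w) (hv : t • v + t' • (-w) = -v) : w = v := by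
  have e1 : s • v = (1 + s') • w := by
    rw [add_smul, one_smul]
    have := hw
    rw [smul_neg] at this
    linear_combination (norm := module) this
  have e2 : t' • w = (1 + t) • v := by
    rw [add_smul, one_smul]
    have := hv
    rw [smul_neg] at this
    linear_combination (norm := module) -this
  have e3 : (t' * s - (1 + s') * (1 + t)) • v = 0 := by
    have : t' • (s • v) = (1 + s') • (t' • w) := by
      rw [e1, smul_comm]
    rw [e2, smul_smul, smul_smul] at this
    rw [sub_smul]
    linear_combination (norm := module) this
  by_cases hc : t' * s - (1 + s') * (1 + t) = 0
  · have hs'0 : s' = 0 := by nlinarith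
    have ht0 : t = 0 := by nlinarith
    have hs1' : s = 1 := by linarith
    rw [hs'0, hs1'] at e1
    simpa using e1.symm
  · have hv0 : v = 0 := by
      rcases smul_eq_zero.mp e3 with h | h
      · exact absurd h hc
      · exact h
    rw [hv0, smul_zero] at e1
    have : w = 0 := by
      have h1 : (1 : ℝ) + s' ≠ 0 := by positivity
      exact (smul_eq_zero.mp e1.symm).resolve_left h1
    rw [this, hv0]

theorem two_neighborly_cs_polytope_is_antipodal
    (d : ℕ) (V : Finset (Fin d → ℝ)) (P : Set (Fin d → ℝ))
    (hP : P = convexHull ℝ (V : Set (Fin d → ℝ)))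
    (hcs : ∀ v ∈ V, -v ∈ V)
    (hvert : ∀ v ∈ V, ∃ a : Fin d → ℝ,
      (∀ x ∈ P, ∑ i, a i * x i ≤ ∑ i, a i * v i) ∧
      {x ∈ P | ∑ i, a i * x i = ∑ i, a i * v i} = {v})
    (hneigh : ∀ v ∈ V, ∀ w ∈ V, v ≠ w → v ≠ -w →
      ∃ a : Fin d → ℝ, ∃ c : ℝ,
        (∀ x ∈ P, ∑ i, a i * x i ≤ c) ∧
        {x ∈ P | ∑ i, a i * x i = c} = segment ℝ v w) :
    ∀ v ∈ V, ∀ w ∈ V, v ≠ w →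
      ∃ a : Fin d → ℝ, a ≠ 0 ∧
        (∀ x ∈ P, ∑ i, a i * x i ≤ ∑ i, a i * v i) ∧
        (∀ x ∈ P, ∑ i, a i * w i ≤ ∑ i, a i * x i) ∧
        ∑ i, a i * w i ≠ ∑ i, a i * v i := by
  intro v hv w hw hvw
  -- P is centrally symmetric
  have hPneg : ∀ x ∈ P, -x ∈ P := by
    intro x hx
    rw [hP] at hx ⊢
    have : (-(V : Set (Fin d → ℝ))) = (V : Set (Fin d → ℝ)) := by
      ext y
      simp only [Set.mem_neg, Finset.mem_coe]
      constructor
      · intro h; simpa using hcs _ h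
      · intro h; exact hcs _ h
    rw [← this, convexHull_neg]
    exact Set.neg_mem_neg.mpr hx
  have hmem : ∀ u ∈ V, u ∈ P := by
    intro u hu
    rw [hP]; exact subset_convexHull ℝ _ hu
  have sumneg : ∀ (a x : Fin d → ℝ), ∑ i, a i * (-x) i = -∑ i, a i * x i := by
    intro a x
    simp [mul_neg, Finset.sum_neg_distrib]
  by_cases hwv : w = -v
  · -- antipodal case: use vertex supporting hyperplane at v
    obtain ⟨a, hmax, hface⟩ := hvert v hv
    have hne : ∑ i, a i * w i ≠ ∑ i, a i * v i := by
      intro h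
      have : w ∈ {x ∈ P | ∑ i, a i * x i = ∑ i, a i * v i} := ⟨hmem w hw, h⟩
      rw [hface] at this
      exact hvw (Set.mem_singleton_iff.mp this).symm
    refine ⟨a, ?_, hmax, ?_, hne⟩
    · intro h; apply hne; simp [h]
    · intro x hx
      have := hmax (-x) (hPneg x hx)
      rw [sumneg] at this
      rw [hwv, sumneg]
      linarith
  · -- non-antipodal: edge between v and -w
    have hnw : -w ∈ V := hcs w hw
    have h1 : v ≠ -w := fun h => hwv (by rw [h]; simp)
    have h2 : v ≠ -(-w) := by simpa using hvw
    obtain ⟨a, c, hmax, hface⟩ := hneigh v hv (-w) hnw h1 h2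
    have hvface : v ∈ {x ∈ P | ∑ i, a i * x i = c} := by
      rw [hface]; exact left_mem_segment ℝ v (-w)
    have hwface : -w ∈ {x ∈ P | ∑ i, a i * x i = c} := by
      rw [hface]; exact right_mem_segment ℝ v (-w)
    have hav : ∑ i, a i * v i = c := hvface.2
    have haw : ∑ i, a i * w i = -c := by
      have := hwface.2
      rw [sumneg] at this
      linarith
    have hc0 : c ≠ 0 := by
      intro hc
      -- then -v and w are also on the face = segment v (-w)
      have hnv : -v ∈ {x ∈ P | ∑ i, a i * x i = c} := by
        refine ⟨hPneg v (hmem v hv), ?_⟩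
        rw [sumneg, hav, hc]; ring
      have hwf : w ∈ {x ∈ P | ∑ i, a i * x i = c} := by
        refine ⟨hmem w hw, ?_⟩
        rw [haw, hc]; ring
      rw [hface] at hnv hwf
      obtain ⟨s, s', hs, hs', hs1, hws⟩ := hwf
      obtain ⟨t, t', ht, ht', ht1, hvs⟩ := hnv
      exact hvw (seg_aux hs hs' hs1 ht ht' ht1 hws hvs).symm
    refine ⟨a, ?_, ?_, ?_, ?_⟩
    · intro h
      apply hc0
      rw [← hav, h]
      simp
    · intro x hx; rw [hav]; exact hmax x hx
    · intro x hx
      have := hmax (-x) (hPneg x hx)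
      rw [sumneg] at this
      rw [haw]; linarith
    · rw [hav, haw]
      intro h
      apply hc0
      linarith
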